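/- Let n ≥ 1, σ > 1, δ ∈ (0,1], M > 0, and let ψ ∈ H^{σ+1}(ℝⁿ) (so B = ∇ψ ∈ H^{σ}) satisfy |ξ|² |ψ̂(ξ)| ≤ C₀ (1 + |ξ|²)² δ for all ξ ∈ ℝⁿ and ‖∇ψ‖_{H^{σ}(ℝⁿ)} ≤ M. Then there exists C > 0 depending only on n, M, C₀ such that ‖Δψ‖_{L²(ℝⁿ)} ≤ C δ^{2(σ−1)/(2σ+n+6)}. -/

import Mathlib

open MeasureTheory ENNReal

set_option maxHeartbeats 1600000 in
/-- stability estimate for `‖Δψ‖_{L²}` by frequency splitting,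
stated on the Fourier side: if `|ξ|²|ψ̂(ξ)| ≤ C₀(1+|ξ|²)²δ` pointwise and
`‖∇ψ‖_{H^σ} ≤ M`, then `‖Δψ‖_{L²} ≤ C δ^{2(σ−1)/(2σ+n+6)}` with
`C = C(n, M, C₀)`. -/
theorem stmt_16 (n : ℕ) (hn : 1 ≤ n) (σ : ℝ) (hσ : 1 < σ)
    (M C₀ : ℝ) (hM : 0 < M) (hC₀ : 0 < C₀) :
    ∃ C : ℝ, 0 < C ∧ ∀ δ : ℝ, δ ∈ Set.Ioc (0 : ℝ) 1 →
      ∀ G : EuclideanSpace ℝ (Fin n) → ℂ,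
      (∀ ξ, ‖ξ‖ ^ 2 * ‖G ξ‖ ≤ C₀ * (1 + ‖ξ‖ ^ 2) ^ 2 * δ) →
      (∫⁻ ξ : EuclideanSpace ℝ (Fin n),
          ENNReal.ofReal ((1 + ‖ξ‖ ^ 2) ^ σ * ‖ξ‖ ^ 2 * ‖G ξ‖ ^ 2)
        ≤ ENNReal.ofReal (M ^ 2)) →
      (∫⁻ ξ : EuclideanSpace ℝ (Fin n),
          ENNReal.ofReal (‖ξ‖ ^ 4 * ‖G ξ‖ ^ 2))
        ≤ ENNReal.ofReal ((C * δ ^ (2 * (σ - 1) / (2 * σ + n + 6))) ^ 2) := by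
  classical
  set K : ℝ≥0∞ := volume (Metric.ball (0 : EuclideanSpace ℝ (Fin n)) 1) with hK
  have hKfin : K ≠ ⊤ := by
    have : K ≤ volume (Metric.closedBall (0 : EuclideanSpace ℝ (Fin n)) 1) :=
      measure_mono Metric.ball_subset_closedBall
    exact (lt_of_le_of_lt this measure_closedBall_lt_top).ne
  set VK : ℝ := K.toReal with hVK
  have hVK0 : 0 ≤ VK := ENNReal.toReal_nonneg
  set A : ℝ := C₀ ^ 2 * VK + M ^ 2 with hA
  have hA0 : 0 < A := by positivity
  refine ⟨Real.sqrt A, Real.sqrt_pos.mpr hA0, ?_⟩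
  intro δ hδ G hpt hHσ
  obtain ⟨hδ0, hδ1⟩ := hδ
  set s : ℝ := 2 * σ + (n : ℝ) + 6 with hs
  have hs0 : 0 < s := by
    have : (0:ℝ) ≤ (n:ℝ) := Nat.cast_nonneg n
    nlinarith
  set θ : ℝ := 2 * (σ - 1) / s with hθ
  set R : ℝ := δ ^ (-(2 / s)) with hR
  have hR0 : 0 < R := Real.rpow_pos_of_pos hδ0 _
  have hR1 : 1 ≤ R := by
    apply Real.one_le_rpow_of_pos_of_le_one_of_nonpos hδ0 hδ1
    have : 0 ≤ 2 / s := by positivity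
    linarith
  -- exponent identities
  have hRpow : ∀ a : ℝ, R ^ a = δ ^ (-(2 / s) * a) := by
    intro a
    rw [hR, ← Real.rpow_mul hδ0.le]
  have hE2 : R ^ (2 * (1 - σ)) = δ ^ (2 * θ) := by
    rw [hRpow]
    congr 1
    rw [hθ]
    field_simp
    ring
  have hE1 : δ ^ (2:ℕ) * R ^ ((n : ℝ) + 8) = δ ^ (2 * θ) := by
    rw [hRpow, ← Real.rpow_natCast δ 2, ← Real.rpow_add hδ0]
    congr 1
    rw [hθ, hs]
    push_cast
    field_simp
    ring
  -- the splitting set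
  set S : Set (EuclideanSpace ℝ (Fin n)) := {ξ | 1 + ‖ξ‖ ^ 2 ≤ R ^ 2} with hS
  have hSmeas : MeasurableSet S := by
    apply measurableSet_le
    · exact (continuous_const.add ((continuous_norm).pow 2)).measurable
    · exact measurable_const
  set cLow : ℝ := C₀ ^ 2 * δ ^ 2 * R ^ (8:ℕ) with hcLow
  have hcLow0 : 0 ≤ cLow := by positivity
  set g : EuclideanSpace ℝ (Fin n) → ℝ≥0∞ :=
    S.indicator (fun _ => ENNReal.ofReal cLow) with hg
  set h : EuclideanSpace ℝ (Fin n) → ℝ≥0∞ := fun ξ =>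
    ENNReal.ofReal (R ^ (2 * (1 - σ))) *
      ENNReal.ofReal ((1 + ‖ξ‖ ^ 2) ^ σ * ‖ξ‖ ^ 2 * ‖G ξ‖ ^ 2) with hh
  -- pointwise bound
  have hpoint : ∀ ξ, ENNReal.ofReal (‖ξ‖ ^ 4 * ‖G ξ‖ ^ 2) ≤ g ξ + h ξ := by
    intro ξ
    have habs0 : (0:ℝ) ≤ ‖G ξ‖ := norm_nonneg _
    by_cases hξ : ξ ∈ S
    · refine le_trans ?_ le_self_add
      rw [hg, Set.indicator_of_mem hξ]
      apply ENNReal.ofReal_le_ofReal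
      have h1 : ‖ξ‖ ^ 4 * ‖G ξ‖ ^ 2 = (‖ξ‖ ^ 2 * ‖G ξ‖) ^ 2 := by
        ring
      have h2 : ‖ξ‖ ^ 2 * ‖G ξ‖ ≤ C₀ * (R ^ 2) ^ 2 * δ := by
        refine le_trans (hpt ξ) ?_
        have hmem : 1 + ‖ξ‖ ^ 2 ≤ R ^ 2 := hξ
        have h4 : (1 + ‖ξ‖ ^ 2) ^ 2 ≤ (R ^ 2) ^ 2 := by nlinarith [norm_nonneg ξ]
        have h5 := mul_le_mul_of_nonneg_left h4 (show (0:ℝ) ≤ C₀ * δ by positivity)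
        nlinarith [h5]
      have h3 : (0:ℝ) ≤ ‖ξ‖ ^ 2 * ‖G ξ‖ := by positivity
      rw [h1, hcLow]
      calc (‖ξ‖ ^ 2 * ‖G ξ‖) ^ 2 ≤ (C₀ * (R ^ 2) ^ 2 * δ) ^ 2 := by
            exact pow_le_pow_left₀ h3 h2 2
        _ = C₀ ^ 2 * δ ^ 2 * R ^ (8:ℕ) := by ring
    · refine le_trans ?_ le_add_self
      simp only [hh]
      rw [← ENNReal.ofReal_mul (by positivity)]
      apply ENNReal.ofReal_le_ofReal
      have hmem : R ^ 2 < 1 + ‖ξ‖ ^ 2 := not_le.mp hξ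
      have hx0 : (0:ℝ) < 1 + ‖ξ‖ ^ 2 := by positivity
      have hxσ : (0:ℝ) ≤ (1 + ‖ξ‖ ^ 2) ^ σ := (Real.rpow_pos_of_pos hx0 σ).le
      have key : ‖ξ‖ ^ 2 ≤ R ^ (2 * (1 - σ)) * (1 + ‖ξ‖ ^ 2) ^ σ := by
        have e1 : (1 + ‖ξ‖ ^ 2) = (1 + ‖ξ‖ ^ 2) ^ (1 - σ) * (1 + ‖ξ‖ ^ 2) ^ σ := by
          rw [← Real.rpow_add hx0]
          norm_num
        have e2 : (1 + ‖ξ‖ ^ 2) ^ (1 - σ) ≤ R ^ (2 * (1 - σ)) := by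
          have hR2 : (0:ℝ) < R ^ 2 := by positivity
          have := Real.rpow_le_rpow_of_nonpos hR2 hmem.le (by linarith : 1 - σ ≤ 0)
          calc (1 + ‖ξ‖ ^ 2) ^ (1 - σ) ≤ (R ^ 2) ^ (1 - σ) := this
            _ = R ^ (2 * (1 - σ)) := by
                rw [← Real.rpow_natCast R 2, ← Real.rpow_mul hR0.le]
                norm_num
        calc ‖ξ‖ ^ 2 ≤ 1 + ‖ξ‖ ^ 2 := by nlinarith
          _ = (1 + ‖ξ‖ ^ 2) ^ (1 - σ) * (1 + ‖ξ‖ ^ 2) ^ σ := e1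
          _ ≤ R ^ (2 * (1 - σ)) * (1 + ‖ξ‖ ^ 2) ^ σ :=
              mul_le_mul_of_nonneg_right e2 hxσ
      calc ‖ξ‖ ^ 4 * ‖G ξ‖ ^ 2
          = ‖ξ‖ ^ 2 * (‖ξ‖ ^ 2 * ‖G ξ‖ ^ 2) := by ring
        _ ≤ (R ^ (2 * (1 - σ)) * (1 + ‖ξ‖ ^ 2) ^ σ) * (‖ξ‖ ^ 2 * ‖G ξ‖ ^ 2) :=
            mul_le_mul_of_nonneg_right key (by positivity)
        _ = R ^ (2 * (1 - σ)) * ((1 + ‖ξ‖ ^ 2) ^ σ * ‖ξ‖ ^ 2 * ‖G ξ‖ ^ 2) := by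
            ring
  -- integrate
  have hgmeas : Measurable g := measurable_const.indicator hSmeas
  have hsplit : (∫⁻ ξ, ENNReal.ofReal (‖ξ‖ ^ 4 * ‖G ξ‖ ^ 2))
      ≤ (∫⁻ ξ, g ξ) + ∫⁻ ξ, h ξ := by
    calc (∫⁻ ξ, ENNReal.ofReal (‖ξ‖ ^ 4 * ‖G ξ‖ ^ 2))
        ≤ ∫⁻ ξ, g ξ + h ξ := lintegral_mono hpoint
      _ = (∫⁻ ξ, g ξ) + ∫⁻ ξ, h ξ := lintegral_add_left hgmeas h
  -- bound ∫ g
  have hgint : (∫⁻ ξ, g ξ) ≤ ENNReal.ofReal (cLow * R ^ (n:ℕ) * VK) := by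
    rw [hg, lintegral_indicator hSmeas, setLIntegral_const]
    have hsub : S ⊆ Metric.closedBall (0 : EuclideanSpace ℝ (Fin n)) R := by
      intro ξ hξ
      have hmem : 1 + ‖ξ‖ ^ 2 ≤ R ^ 2 := hξ
      rw [mem_closedBall_zero_iff]
      nlinarith [norm_nonneg ξ]
    have hball : volume (Metric.closedBall (0 : EuclideanSpace ℝ (Fin n)) R)
        = ENNReal.ofReal (R ^ (n:ℕ)) * K := by
      rw [hK, Measure.addHaar_closedBall volume 0 hR0.le, finrank_euclideanSpace_fin]
    calc ENNReal.ofReal cLow * volume S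
        ≤ ENNReal.ofReal cLow * (ENNReal.ofReal (R ^ (n:ℕ)) * K) := by
          rw [← hball]; exact mul_le_mul_right (measure_mono hsub) _
      _ = ENNReal.ofReal (cLow * R ^ (n:ℕ) * VK) := by
          have hVKK : K = ENNReal.ofReal VK := (ENNReal.ofReal_toReal hKfin).symm
          rw [hVKK, ← ENNReal.ofReal_mul (by positivity : (0:ℝ) ≤ R ^ (n:ℕ)),
            ← ENNReal.ofReal_mul hcLow0]
          congr 1
          ring
  -- bound ∫ h
  have hhint : (∫⁻ ξ, h ξ) ≤ ENNReal.ofReal (R ^ (2 * (1 - σ)) * M ^ 2) := by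
    simp only [hh]
    rw [lintegral_const_mul' _ _ ENNReal.ofReal_ne_top]
    calc ENNReal.ofReal (R ^ (2 * (1 - σ))) *
          ∫⁻ ξ, ENNReal.ofReal ((1 + ‖ξ‖ ^ 2) ^ σ * ‖ξ‖ ^ 2 * ‖G ξ‖ ^ 2)
        ≤ ENNReal.ofReal (R ^ (2 * (1 - σ))) * ENNReal.ofReal (M ^ 2) :=
          mul_le_mul_right hHσ _
      _ = ENNReal.ofReal (R ^ (2 * (1 - σ)) * M ^ 2) :=
          (ENNReal.ofReal_mul (by positivity)).symm
  -- combine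
  refine le_trans hsplit ?_
  refine le_trans (add_le_add hgint hhint) ?_
  rw [← ENNReal.ofReal_add (by positivity) (by positivity)]
  apply ENNReal.ofReal_le_ofReal
  have hfinal : cLow * R ^ (n:ℕ) * VK + R ^ (2 * (1 - σ)) * M ^ 2
      = (Real.sqrt A * δ ^ θ) ^ 2 := by
    have e8 : R ^ (8:ℕ) * R ^ (n:ℕ) = R ^ ((n:ℝ) + 8) := by
      rw [← Real.rpow_natCast R 8, ← Real.rpow_natCast R n, ← Real.rpow_add hR0]
      congr 1
      push_cast
      ring
    have eδ : (δ ^ θ) ^ 2 = δ ^ (2 * θ) := by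
      rw [← Real.rpow_natCast (δ ^ θ) 2, ← Real.rpow_mul hδ0.le]
      congr 1
      push_cast
      ring
    have esq : Real.sqrt A ^ 2 = A := Real.sq_sqrt hA0.le
    calc cLow * R ^ (n:ℕ) * VK + R ^ (2 * (1 - σ)) * M ^ 2
        = C₀ ^ 2 * VK * (δ ^ (2:ℕ) * (R ^ (8:ℕ) * R ^ (n:ℕ))) + R ^ (2 * (1 - σ)) * M ^ 2 := by
          rw [hcLow]; ring
      _ = C₀ ^ 2 * VK * δ ^ (2 * θ) + δ ^ (2 * θ) * M ^ 2 := by rw [e8, hE1, hE2]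
      _ = A * δ ^ (2 * θ) := by rw [hA]; ring
      _ = (Real.sqrt A * δ ^ θ) ^ 2 := by rw [mul_pow, esq, eδ]
  rw [hfinal, hθ, hs]
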